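/- The radial probability function e(x,v) = μ_η({r ≥ 0 : g(x, rLv) ≤ 0}) is continuous at every (x,v) ∈ X × S^{m-1} with g(x,0) < 0. -/

import Mathlib

open MeasureTheory

open ProbabilityTheory Set Filter Function Topology

open ProbabilityTheory Set Filter Function in
private lemma aux_convexOn_smul {E : Type*} [AddCommGroup E] [Module ℝ E] {g : E → ℝ}
    (hg : ConvexOn ℝ Set.univ g) (w : E) :
    ConvexOn ℝ Set.univ (fun r : ℝ => g (r • w)) := by
  refine ⟨convex_univ, fun r _ s _ a b ha hb hab => ?_⟩
  have h1 : (a • r + b • s) • w = a • (r • w) + b • (s • w) := by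
    simp [add_smul, smul_smul]
  simp only [h1]
  exact hg.2 (Set.mem_univ _) (Set.mem_univ _) ha hb hab

open ProbabilityTheory Set Filter Function in
private lemma aux_convex_le {h : ℝ → ℝ} (hc : ConvexOn ℝ Set.univ h) {a r : ℝ}
    (h0 : h 0 ≤ 0) (ha : h a ≤ 0) (hr0 : 0 ≤ r) (hra : r ≤ a) : h r ≤ 0 := by
  rcases eq_or_lt_of_le (hr0.trans hra) with haeq | hapos
  · have : r = 0 := le_antisymm (hra.trans haeq.symm.le) hr0
    simpa [this] using h0
  · set t := r / a with ht
    have ht0 : 0 ≤ t := div_nonneg hr0 hapos.le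
    have ht1 : t ≤ 1 := div_le_one_of_le₀ hra hapos.le
    have key := hc.2 (Set.mem_univ (0:ℝ)) (Set.mem_univ a)
      (by linarith : (0:ℝ) ≤ 1 - t) ht0 (by ring)
    have hxr : (1 - t) • (0:ℝ) + t • a = r := by
      simp [ht, smul_eq_mul, hapos.ne']
    rw [hxr] at key
    have e1 : (1 - t) • h 0 ≤ 0 := by
      simp only [smul_eq_mul]
      exact mul_nonpos_of_nonneg_of_nonpos (by linarith) h0
    have e2 : t • h a ≤ 0 := by
      simp only [smul_eq_mul]
      exact mul_nonpos_of_nonneg_of_nonpos ht0 ha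
    linarith

open ProbabilityTheory Set Filter Function in
private lemma aux_convex_pos {h : ℝ → ℝ} (hc : ConvexOn ℝ Set.univ h) {R b : ℝ}
    (h0 : h 0 < 0) (hR : 0 ≤ h R) (hR0 : 0 < R) (hRb : R < b) : 0 < h b := by
  set t := R / b with ht
  have hb0 : 0 < b := hR0.trans hRb
  have ht0 : 0 < t := div_pos hR0 hb0
  have ht1 : t < 1 := (div_lt_one hb0).2 hRb
  have key := hc.2 (Set.mem_univ (0:ℝ)) (Set.mem_univ b)
    (by linarith : (0:ℝ) ≤ 1 - t) ht0.le (by ring)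
  have hxr : (1 - t) • (0:ℝ) + t • b = R := by simp [ht, smul_eq_mul, hb0.ne']
  rw [hxr] at key
  simp only [smul_eq_mul] at key
  nlinarith [mul_pos (sub_pos.2 ht1) (neg_pos.2 h0)]

open ProbabilityTheory Set Filter Function in
private lemma aux_cdf_continuousAt (μ : Measure ℝ) [IsProbabilityMeasure μ]
    (hna : ∀ t : ℝ, μ {t} = 0) (t : ℝ) : ContinuousAt (cdf μ) t := by
  have hm : Monotone (cdf μ) := monotone_cdf μ
  rw [hm.continuousAt_iff_leftLim_eq_rightLim]
  have hr : rightLim (cdf μ) t = cdf μ t :=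
    hm.continuousWithinAt_Ioi_iff_rightLim_eq.1
      (((cdf μ).right_continuous t).mono Ioi_subset_Ici_self)
  have hsing := (cdf μ).measure_singleton t
  rw [measure_cdf, hna t] at hsing
  have h1 : cdf μ t - leftLim (cdf μ) t ≤ 0 := by
    by_contra hcon
    push_neg at hcon
    rw [eq_comm, ENNReal.ofReal_eq_zero] at hsing
    linarith
  have h2 : leftLim (cdf μ) t ≤ cdf μ t := hm.leftLim_le le_rfl
  have hl : leftLim (cdf μ) t = cdf μ t := by linarith
  rw [hl, hr]

open ProbabilityTheory Set Filter Function in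
private lemma aux_lower_bound (μ : Measure ℝ) [IsProbabilityMeasure μ]
    (h0 : μ (Set.Iio 0) = 0) {A : Set ℝ} {a : ℝ} (ha : 0 ≤ a)
    (hsub : Set.Icc 0 a ⊆ A) : cdf μ a ≤ (μ A).toReal := by
  have h1 : μ (Set.Iic a) ≤ μ A := by
    calc μ (Set.Iic a) ≤ μ (Set.Iio 0 ∪ Set.Icc 0 a) := by
          apply measure_mono
          intro r hr
          rcases lt_or_ge r 0 with h | h
          · exact Or.inl h
          · exact Or.inr ⟨h, hr⟩
      _ ≤ μ (Set.Iio 0) + μ (Set.Icc 0 a) := measure_union_le _ _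
      _ = μ (Set.Icc 0 a) := by rw [h0, zero_add]
      _ ≤ μ A := measure_mono hsub
  rw [cdf_eq_real, measureReal_def]
  exact ENNReal.toReal_mono (measure_ne_top μ A) h1

open ProbabilityTheory Set Filter Function in
private lemma aux_upper_bound (μ : Measure ℝ) [IsProbabilityMeasure μ]
    {A : Set ℝ} {b : ℝ} (hsub : A ⊆ Set.Iic b) : (μ A).toReal ≤ cdf μ b := by
  rw [cdf_eq_real, measureReal_def]
  exact ENNReal.toReal_mono (measure_ne_top μ _) (measure_mono hsub)

/-- the radial probability function
`e (x, v) = μ_η {r ≥ 0 | g x (r • L v) ≤ 0}` is continuous (relative to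
`X × S^{m-1}`) at every `(x, v)` with `g x 0 < 0` and `v` on the unit sphere.
Here `μ_η` is a probability measure concentrated on `[0, ∞)` with no atoms
(e.g. the Chi distribution with `m` degrees of freedom). -/
theorem radial_prob_continuous
    {X : Type*} [NormedAddCommGroup X] [NormedSpace ℝ X] {m : ℕ}
    (g : X → EuclideanSpace ℝ (Fin m) → ℝ)
    (hg_lip : LocallyLipschitz fun p : X × EuclideanSpace ℝ (Fin m) => g p.1 p.2)
    (hg_conv : ∀ x, ConvexOn ℝ Set.univ (g x))
    (L : EuclideanSpace ℝ (Fin m) ≃L[ℝ] EuclideanSpace ℝ (Fin m))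
    (μη : Measure ℝ) [IsProbabilityMeasure μη]
    (hμ_supp : μη (Set.Iio 0) = 0)
    (hμ_noatom : ∀ t : ℝ, μη {t} = 0)
    (x : X) (v : EuclideanSpace ℝ (Fin m))
    (hx0 : g x 0 < 0) (hv : ‖v‖ = 1) :
    ContinuousWithinAt
      (fun p : X × EuclideanSpace ℝ (Fin m) =>
        (μη {r : ℝ | 0 ≤ r ∧ g p.1 (r • L p.2) ≤ 0}).toReal)
      (Set.univ ×ˢ Metric.sphere (0 : EuclideanSpace ℝ (Fin m)) 1) (x, v) := by
  classical
  set F : ℝ → ℝ := fun t => ProbabilityTheory.cdf μη t with hF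
  -- the function of p, for a fixed radius r, is continuous in p
  have hcont : ∀ r : ℝ, Continuous fun p : X × EuclideanSpace ℝ (Fin m) =>
      g p.1 (r • L p.2) := by
    intro r
    have h1 : Continuous fun p : X × EuclideanSpace ℝ (Fin m) => (p.1, r • L p.2) :=
      continuous_fst.prodMk ((L.continuous.comp continuous_snd).const_smul r)
    exact hg_lip.continuous.comp h1
  -- convexity of the radial slice
  have hconv : ∀ p : X × EuclideanSpace ℝ (Fin m),
      ConvexOn ℝ Set.univ (fun r : ℝ => g p.1 (r • L p.2)) :=
    fun p => aux_convexOn_smul (hg_conv p.1) (L p.2)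
  -- base radial function
  set φ : ℝ → ℝ := fun r => g x (r • L v) with hφ
  have hφ0 : φ 0 < 0 := by simpa [hφ] using hx0
  have hφconv : ConvexOn ℝ Set.univ φ := hconv (x, v)
  have hφcont : Continuous φ := by
    have h1 : Continuous fun r : ℝ => ((x, r • L v) : X × EuclideanSpace ℝ (Fin m)) :=
      continuous_const.prodMk (continuous_id.smul continuous_const)
    exact hg_lip.continuous.comp h1
  -- the eventual condition g p.1 0 < 0
  have hc0 : Continuous fun p : X × EuclideanSpace ℝ (Fin m) => g p.1 0 := by
    have := hcont 0
    simpa using this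
  have ev0 : ∀ᶠ p : X × EuclideanSpace ℝ (Fin m) in nhds (x, v), g p.1 0 < 0 :=
    (hc0.tendsto (x, v)).eventually_lt_const hx0
  rw [ContinuousWithinAt, Metric.tendsto_nhds]
  intro ε hε
  by_cases hpos : ∃ r : ℝ, 0 < r ∧ 0 < φ r
  · -- Case 1: φ becomes positive; the boundary radius R is finite
    obtain ⟨r₁, hr₁0, hr₁⟩ := hpos
    set s : Set ℝ := {r : ℝ | 0 ≤ r ∧ 0 ≤ φ r} with hs
    have hs_ne : s.Nonempty := ⟨r₁, hr₁0.le, hr₁.le⟩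
    have hs_bdd : BddBelow s := ⟨0, fun r hr => hr.1⟩
    have hs_closed : IsClosed s := by
      have : s = Set.Ici (0:ℝ) ∩ φ ⁻¹' Set.Ici (0:ℝ) := by
        ext r; simp [hs, Set.mem_Ici]
      rw [this]
      exact isClosed_Ici.inter (isClosed_Ici.preimage hφcont)
    set R : ℝ := sInf s with hR
    have hRmem : R ∈ s := hs_closed.csInf_mem hs_ne hs_bdd
    have hR0 : 0 < R := by
      rcases lt_or_eq_of_le hRmem.1 with h | h
      · exact h
      · exfalso; rw [← h] at hRmem; exact absurd hRmem.2 (not_le.2 hφ0)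
    -- continuity of the cdf at R gives a, b
    have hFc : ContinuousAt F R := aux_cdf_continuousAt μη hμ_noatom R
    rw [Metric.continuousAt_iff] at hFc
    obtain ⟨δ, hδ0, hδ⟩ := hFc (ε / 2) (by linarith)
    set δ' : ℝ := min (δ / 2) (R / 2) with hδ'
    have hδ'0 : 0 < δ' := lt_min (by linarith) (by linarith)
    have hδ'R : δ' < R := lt_of_le_of_lt (min_le_right _ _) (by linarith)
    have hδ'δ : δ' < δ := lt_of_le_of_lt (min_le_left _ _) (by linarith)
    set a : ℝ := R - δ' with ha
    set b : ℝ := R + δ' with hb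
    have ha0 : 0 < a := by simp only [ha]; linarith
    have hb0 : 0 < b := by simp only [hb]; linarith
    have hFab : F b - F a < ε := by
      have h1 : dist (F a) (F R) < ε / 2 := hδ (by
        rw [Real.dist_eq]; simp only [ha]; rw [abs_of_nonpos (by linarith)]; linarith)
      have h2 : dist (F b) (F R) < ε / 2 := hδ (by
        rw [Real.dist_eq]; simp only [hb]; rw [abs_of_nonneg (by linarith)]; linarith)
      rw [Real.dist_eq] at h1 h2
      have := abs_lt.1 h1
      have := abs_lt.1 h2
      linarith [(abs_lt.1 h1).1, (abs_lt.1 h1).2, (abs_lt.1 h2).1, (abs_lt.1 h2).2]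
    -- φ a < 0 and φ b > 0
    have hφa : φ a < 0 := by
      have hnm : a ∉ s := notMem_of_lt_csInf (by simp only [ha]; linarith) hs_bdd
      by_contra hcon
      push_neg at hcon
      exact hnm ⟨ha0.le, hcon⟩
    have hφb : 0 < φ b := aux_convex_pos hφconv hφ0 hRmem.2 hR0 (by simp only [hb]; linarith)
    -- eventual conditions
    have eva : ∀ᶠ p : X × EuclideanSpace ℝ (Fin m) in nhds (x, v), g p.1 (a • L p.2) < 0 :=
      ((hcont a).tendsto (x, v)).eventually_lt_const hφa
    have evb : ∀ᶠ p : X × EuclideanSpace ℝ (Fin m) in nhds (x, v), 0 < g p.1 (b • L p.2) :=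
      ((hcont b).tendsto (x, v)).eventually_const_lt hφb
    have evall := (ev0.and (eva.and evb)).filter_mono (nhdsWithin_le_nhds
      (s := Set.univ ×ˢ Metric.sphere (0 : EuclideanSpace ℝ (Fin m)) 1))
    filter_upwards [evall] with p hp
    obtain ⟨hp0, hpa, hpb⟩ := hp
    -- bounds for a general point q satisfying the three conditions
    have key : ∀ q : X × EuclideanSpace ℝ (Fin m), g q.1 0 < 0 → g q.1 (a • L q.2) < 0 → 0 < g q.1 (b • L q.2) →
        F a ≤ (μη {r : ℝ | 0 ≤ r ∧ g q.1 (r • L q.2) ≤ 0}).toReal ∧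
        (μη {r : ℝ | 0 ≤ r ∧ g q.1 (r • L q.2) ≤ 0}).toReal ≤ F b := by
      intro q hq0 hqa hqb
      have hq0' : g q.1 ((0:ℝ) • L q.2) ≤ 0 := by simpa using hq0.le
      constructor
      · apply aux_lower_bound μη hμ_supp ha0.le
        intro r hr
        exact ⟨hr.1, aux_convex_le (hconv q) hq0' hqa.le hr.1 hr.2⟩
      · apply aux_upper_bound μη
        intro r hr
        by_contra hcon
        rw [Set.mem_Iic, not_le] at hcon
        have : g q.1 (b • L q.2) ≤ 0 :=
          aux_convex_le (hconv q) hq0' hr.2 hb0.le hcon.le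
        linarith
    have h1 := key p hp0 hpa hpb
    have h2 := key (x, v) hx0 hφa hφb
    rw [Real.dist_eq, abs_lt]
    constructor <;> linarith [h1.1, h1.2, h2.1, h2.2]
  · -- Case 2: φ ≤ 0 everywhere on [0, ∞); in fact φ < 0 there
    push_neg at hpos
    have hneg : ∀ r : ℝ, 0 ≤ r → φ r < 0 := by
      intro r hr
      rcases lt_or_eq_of_le hr with h | h
      · rcases lt_or_eq_of_le (hpos r h) with h2 | h2
        · exact h2
        · exfalso
          have := aux_convex_pos hφconv hφ0 h2.ge h (by linarith : r < r + 1)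
          exact absurd (hpos (r + 1) (by linarith)) (not_le.2 this)
      · rw [← h]; exact hφ0
    -- pick M with 1 - ε < F M and 0 ≤ M
    have hev : ∀ᶠ t : ℝ in atTop, 1 - ε < F t :=
      (ProbabilityTheory.tendsto_cdf_atTop μη).eventually_const_lt (show (1:ℝ) - ε < 1 by linarith)
    obtain ⟨M, hM1, hM0⟩ := (hev.and (eventually_ge_atTop (0:ℝ))).exists
    have hφM : φ M < 0 := hneg M hM0
    have evM : ∀ᶠ p : X × EuclideanSpace ℝ (Fin m) in nhds (x, v), g p.1 (M • L p.2) < 0 :=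
      ((hcont M).tendsto (x, v)).eventually_lt_const hφM
    have evall := (ev0.and evM).filter_mono (nhdsWithin_le_nhds
      (s := Set.univ ×ˢ Metric.sphere (0 : EuclideanSpace ℝ (Fin m)) 1))
    filter_upwards [evall] with p hp
    obtain ⟨hp0, hpM⟩ := hp
    have key : ∀ q : X × EuclideanSpace ℝ (Fin m), g q.1 0 < 0 → g q.1 (M • L q.2) < 0 →
        F M ≤ (μη {r : ℝ | 0 ≤ r ∧ g q.1 (r • L q.2) ≤ 0}).toReal ∧
        (μη {r : ℝ | 0 ≤ r ∧ g q.1 (r • L q.2) ≤ 0}).toReal ≤ 1 := by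
      intro q hq0 hqM
      have hq0' : g q.1 ((0:ℝ) • L q.2) ≤ 0 := by simpa using hq0.le
      constructor
      · apply aux_lower_bound μη hμ_supp hM0
        intro r hr
        exact ⟨hr.1, aux_convex_le (hconv q) hq0' hqM.le hr.1 hr.2⟩
      · have hle : μη {r : ℝ | 0 ≤ r ∧ g q.1 (r • L q.2) ≤ 0} ≤ 1 := prob_le_one
        have := ENNReal.toReal_mono ENNReal.one_ne_top hle
        simpa using this
    have h1 := key p hp0 hpM
    have h2 := key (x, v) hx0 hφM
    rw [Real.dist_eq, abs_lt]
    simp only at h1 h2 ⊢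
    constructor <;> linarith [h1.1, h1.2, h2.1, h2.2]
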